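/- (Maximum at boundaries for the absolute statistical parity smooth sensitivity) Let β > 0 and m > 0 be real numbers and let N0 ≥ 2 be an integer. Then the maximum over integers k ∈ {0, 1, …, N0 − 2} of m · e^{−kβ} / (N0 − k) equals max( m/N0 , m · e^{−(N0 − 2)β} / 2 ). -/

import Mathlib

open Real Set

/-- Maximum at boundaries for the absolute statistical parity smooth
sensitivity: the maximum over integers `k ∈ {0, …, N0 - 2}` of `m·e^{-kβ}/(N0 - k)`
equals `max( m/N0 , m·e^{-(N0-2)β}/2 )`. -/
theorem abs_sp_smooth_sensitivity_max (β m : ℝ) (hβ : 0 < β) (hm : 0 < m)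
    (N0 : ℕ) (hN0 : 2 ≤ N0) :
    (Finset.range (N0 - 1)).sup' (Finset.nonempty_range_iff.mpr (by omega))
      (fun k => m * Real.exp (-(k : ℝ) * β) / ((N0 : ℝ) - k))
    = max (m / (N0 : ℝ)) (m * Real.exp (-((N0 : ℝ) - 2) * β) / 2) := by
  have hN : (2:ℝ) ≤ (N0:ℝ) := by exact_mod_cast hN0
  set N : ℝ := (N0:ℝ) with hNdef
  set h : ℝ → ℝ := fun x => (Real.log m + (-β) * x) + (- Real.log (N - x)) with hhdef
  -- value identity
  have hval : ∀ x : ℝ, 0 < N - x →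
      m * Real.exp (-x * β) / (N - x) = Real.exp (h x) := by
    intro x hx
    have : h x = Real.log m + (-x*β) - Real.log (N - x) := by
      show (Real.log m + (-β) * x) + (- Real.log (N - x)) = _
      ring
    rw [this, Real.exp_sub, Real.exp_add, Real.exp_log hm, Real.exp_log hx]
  -- convexity of h on Icc 0 (N-2)
  have hconv : ConvexOn ℝ (Icc (0:ℝ) (N-2)) h := by
    apply ConvexOn.add
    · exact ⟨convex_Icc _ _, fun x _ y _ a b ha hb hab => by
        simp only [smul_eq_mul]
        apply le_of_eq
        linear_combination (-Real.log m) * hab⟩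
    · have hlog : ConvexOn ℝ (Ioi (0:ℝ)) (fun y => - Real.log y) :=
        strictConcaveOn_log_Ioi.concaveOn.neg
      have g : ℝ →ᵃ[ℝ] ℝ := AffineMap.const ℝ ℝ N + (-AffineMap.id ℝ ℝ)
      have := hlog.comp_affineMap (AffineMap.const ℝ ℝ N + (-AffineMap.id ℝ ℝ))
      refine this.subset ?_ (convex_Icc _ _)
      intro x hx
      simp only [Set.mem_preimage, AffineMap.coe_add, AffineMap.coe_const,
        AffineMap.coe_neg, AffineMap.coe_id, Pi.add_apply, Pi.neg_apply, id,
        Function.const_apply, Set.mem_Ioi]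
      have := hx.2
      simp [Set.mem_Icc] at hx
      linarith [hx.2]
  -- positivity facts
  have h2 : (0:ℝ) < N - (N - 2) := by ring_nf; norm_num
  apply le_antisymm
  · apply Finset.sup'_le
    intro k hk
    have hk' : (k:ℝ) ≤ N - 2 := by
      rw [Finset.mem_range] at hk
      have : (k:ℝ) ≤ (N0:ℝ) - 2 := by
        have : k ≤ N0 - 2 := by omega
        have := (Nat.cast_le (α := ℝ)).mpr this
        push_cast [Nat.cast_sub hN0] at this ⊢
        linarith
      exact this
    have hk0 : (0:ℝ) ≤ (k:ℝ) := Nat.cast_nonneg k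
    have hkpos : (0:ℝ) < N - (k:ℝ) := by linarith
    have hmem : (k:ℝ) ∈ segment ℝ (0:ℝ) (N-2) := by
      rw [segment_eq_Icc (by linarith : (0:ℝ) ≤ N - 2)]
      exact ⟨hk0, hk'⟩
    have hle := hconv.le_on_segment (x := 0) (y := N-2)
      ⟨le_refl _, by linarith⟩ ⟨by linarith, le_refl _⟩ hmem
    rw [hval _ hkpos]
    have e0 : m / N = Real.exp (h 0) := by
      have := hval 0 (by linarith)
      simpa using this
    have e1 : m * Real.exp (-(N - 2) * β) / 2 = Real.exp (h (N-2)) := by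
      have := hval (N-2) h2
      rw [show N - (N-2) = 2 by ring] at this
      exact this
    rw [e0, e1]
    rcases le_total (h 0) (h (N-2)) with hc | hc
    · exact le_max_of_le_right (Real.exp_le_exp.mpr (hle.trans (max_le hc (le_refl _))))
    · exact le_max_of_le_left (Real.exp_le_exp.mpr (hle.trans (max_le (le_refl _) hc)))
  · apply max_le
    · have h0mem : 0 ∈ Finset.range (N0 - 1) := Finset.mem_range.mpr (by omega)
      have := Finset.le_sup' (f := fun k : ℕ => m * Real.exp (-(k : ℝ) * β) / (N - k)) h0mem
      exact (by simp : m / N = m * Real.exp (-((0:ℕ):ℝ) * β) / (N - ((0:ℕ):ℝ))).trans_le this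
    · have hmem : N0 - 2 ∈ Finset.range (N0 - 1) := Finset.mem_range.mpr (by omega)
      have := Finset.le_sup' (f := fun k : ℕ => m * Real.exp (-(k : ℝ) * β) / (N - k)) hmem
      have hcast : ((N0 - 2 : ℕ) : ℝ) = N - 2 := by
        push_cast [Nat.cast_sub hN0]; ring
      rw [hcast, show N - (N - 2) = 2 by ring] at this
      exact this
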